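/- For n ≥ 3, the orthogonal complement of ST inside the space of asymmetric weighted graphs on n vertices has dimension (n−1)(n−2)/2, and the family of three-cycle graphs {c(0, j, k) : 0 < j < k < n} is a basis of this orthogonal complement. -/

import Mathlib

/-- An asymmetric weighted graph on `n` vertices. -/
def IsAsymGraph {n : ℕ} (d : Fin n → Fin n → ℝ) : Prop :=
  ∀ i j, d i j = -(d j i)

/-- Strong transitivity. -/
def StronglyTransitive {n : ℕ} (d : Fin n → Fin n → ℝ) : Prop :=
  ∀ i j k, d i j + d j k = d i k

/-- The `d`-length of a walk `v` of length `m`. -/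
def walkLen {n m : ℕ} (d : Fin n → Fin n → ℝ) (v : Fin (m + 1) → Fin n) : ℝ :=
  ∑ t : Fin m, d (v t.castSucc) (v t.succ)

/-- The inner product of two weighted graphs. -/
def ginner {n : ℕ} (d e : Fin n → Fin n → ℝ) : ℝ :=
  ∑ i : Fin n, ∑ j : Fin n, d i j * e i j

/-- `d` is orthogonal to every strongly transitive asymmetric graph. -/
def OrthST {n : ℕ} (d : Fin n → Fin n → ℝ) : Prop :=
  ∀ e : Fin n → Fin n → ℝ, IsAsymGraph e → StronglyTransitive e → ginner d e = 0

/-- The three-cycle graph on the pairwise distinct vertices `p q r`. -/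
def threeCycle {n : ℕ} (p q r : Fin n) : Fin n → Fin n → ℝ :=
  fun a b =>
    if (a, b) = (p, q) ∨ (a, b) = (q, r) ∨ (a, b) = (r, p) then 1
    else if (a, b) = (q, p) ∨ (a, b) = (r, q) ∨ (a, b) = (p, r) then -1
    else 0

/-- The `d`-length of a Hamiltonian circuit given by a bijection `v`. -/
def hamLen {n : ℕ} (d : Fin n → Fin n → ℝ) (v : Fin n → Fin n) : ℝ :=
  ∑ t : Fin n, d (v t) (v (finRotate n t))

def eVert {n : ℕ} (m : Fin n) : Fin n → Fin n → ℝ :=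
  fun i j => (if i = m then 1 else 0) - (if j = m then 1 else 0)

set_option maxHeartbeats 1000000 in
lemma threeCycle_asym {n : ℕ} {p q r : Fin n} (hpq : p ≠ q) (hqr : q ≠ r) (hpr : p ≠ r) :
    IsAsymGraph (threeCycle p q r) := by
  intro a b
  rcases eq_or_ne (a, b) (p, q) with h | h1
  · obtain ⟨rfl, rfl⟩ := Prod.mk.inj h
    simp [threeCycle, Prod.ext_iff, hpq, hqr, hpr, hpq.symm, hqr.symm, hpr.symm]
  rcases eq_or_ne (a, b) (q, r) with h | h2
  · obtain ⟨rfl, rfl⟩ := Prod.mk.inj h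
    simp [threeCycle, Prod.ext_iff, hpq, hqr, hpr, hpq.symm, hqr.symm, hpr.symm]
  rcases eq_or_ne (a, b) (r, p) with h | h3
  · obtain ⟨rfl, rfl⟩ := Prod.mk.inj h
    simp [threeCycle, Prod.ext_iff, hpq, hqr, hpr, hpq.symm, hqr.symm, hpr.symm]
  rcases eq_or_ne (a, b) (q, p) with h | h4
  · obtain ⟨rfl, rfl⟩ := Prod.mk.inj h
    simp [threeCycle, Prod.ext_iff, hpq, hqr, hpr, hpq.symm, hqr.symm, hpr.symm]
  rcases eq_or_ne (a, b) (r, q) with h | h5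
  · obtain ⟨rfl, rfl⟩ := Prod.mk.inj h
    simp [threeCycle, Prod.ext_iff, hpq, hqr, hpr, hpq.symm, hqr.symm, hpr.symm]
  rcases eq_or_ne (a, b) (p, r) with h | h6
  · obtain ⟨rfl, rfl⟩ := Prod.mk.inj h
    simp [threeCycle, Prod.ext_iff, hpq, hqr, hpr, hpq.symm, hqr.symm, hpr.symm]
  simp only [ne_eq, Prod.mk.injEq, not_and] at h1 h2 h3 h4 h5 h6
  simp only [threeCycle, Prod.mk.injEq]
  rw [if_neg, if_neg, if_neg, if_neg] <;> simp <;> tauto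

lemma threeCycle_pt {n : ℕ} {p q r : Fin n} (hpq : p ≠ q) (hqr : q ≠ r) (hpr : p ≠ r)
    (e : Fin n → Fin n → ℝ) (a b : Fin n) :
    threeCycle p q r a b * e a b =
      (if a = p then if b = q then e a b else 0 else 0)
      + (if a = q then if b = r then e a b else 0 else 0)
      + (if a = r then if b = p then e a b else 0 else 0)
      - (if a = q then if b = p then e a b else 0 else 0)
      - (if a = r then if b = q then e a b else 0 else 0)
      - (if a = p then if b = r then e a b else 0 else 0) := by
  simp only [threeCycle, Prod.mk.injEq]
  split_ifs <;> simp_all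

lemma ginner_threeCycle {n : ℕ} {p q r : Fin n} (hpq : p ≠ q) (hqr : q ≠ r) (hpr : p ≠ r)
    (e : Fin n → Fin n → ℝ) :
    ginner (threeCycle p q r) e = e p q + e q r + e r p - e q p - e r q - e p r := by
  unfold ginner
  simp only [threeCycle_pt hpq hqr hpr e]
  simp [Finset.sum_add_distrib, Finset.sum_sub_distrib, Finset.sum_ite_eq']

lemma threeCycle_orth {n : ℕ} {p q r : Fin n} (hpq : p ≠ q) (hqr : q ≠ r) (hpr : p ≠ r) :
    OrthST (threeCycle p q r) := by
  intro e he ht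
  rw [ginner_threeCycle hpq hqr hpr]
  have h1 := ht p q r
  have h2 := he q p
  have h3 := he r q
  have h4 := he p r
  have h5 := he r p
  linarith

lemma eVert_asym {n : ℕ} (m : Fin n) : IsAsymGraph (eVert m) := by
  intro i j; unfold eVert; ring

lemma eVert_trans {n : ℕ} (m : Fin n) : StronglyTransitive (eVert m) := by
  intro i j k; unfold eVert; ring

lemma ginner_eVert {n : ℕ} (d : Fin n → Fin n → ℝ) (hd : IsAsymGraph d) (m : Fin n) :
    ginner d (eVert m) = 2 * ∑ j, d m j := by
  simp only [ginner, eVert]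
  have key : ∀ i j : Fin n, d i j * ((if i = m then (1:ℝ) else 0) - (if j = m then 1 else 0))
      = (if i = m then d i j else 0) - (if j = m then d i j else 0) := by
    intro i j; split_ifs <;> ring
  simp only [key]
  rw [Finset.sum_congr rfl (fun i _ => Finset.sum_sub_distrib _ _), Finset.sum_sub_distrib]
  have h3 : (∑ x : Fin n, ∑ y : Fin n, if y = m then d x y else 0) = ∑ x : Fin n, d x m := by
    refine Finset.sum_congr rfl fun x _ => ?_
    simp [Finset.sum_ite_eq']
  have h4 : (∑ x : Fin n, ∑ y : Fin n, if x = m then d x y else 0) = ∑ y : Fin n, d m y := by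
    rw [Finset.sum_comm]
    refine Finset.sum_congr rfl fun y _ => ?_
    simp [Finset.sum_ite_eq']
  rw [h3, h4]
  have h2 : (∑ i : Fin n, d i m) = -∑ i : Fin n, d m i := by
    rw [← Finset.sum_neg_distrib]
    exact Finset.sum_congr rfl fun i _ => hd i m
  rw [h2]; ring

lemma cycle_entry {n : ℕ} (z j k j' k' : Fin n) (hz : (z:ℕ) = 0)
    (hj : 0 < (j:ℕ)) (hjk : (j:ℕ) < (k:ℕ)) (hj' : 0 < (j':ℕ)) (hjk' : (j':ℕ) < (k':ℕ)) :
    threeCycle z j' k' j k = if j = j' ∧ k = k' then 1 else 0 := by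
  simp only [threeCycle, Prod.mk.injEq]
  split_ifs <;> simp_all [Fin.ext_iff] <;> omega

lemma ginner_add_left {n : ℕ} (d e f : Fin n → Fin n → ℝ) :
    ginner (d + e) f = ginner d f + ginner e f := by
  simp [ginner, Pi.add_apply, add_mul, Finset.sum_add_distrib]

lemma ginner_sub_left {n : ℕ} (d e f : Fin n → Fin n → ℝ) :
    ginner (d - e) f = ginner d f - ginner e f := by
  simp [ginner, Pi.sub_apply, sub_mul, Finset.sum_sub_distrib]

lemma ginner_smul_left {n : ℕ} (c : ℝ) (d f : Fin n → Fin n → ℝ) :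
    ginner (c • d) f = c * ginner d f := by
  simp [ginner, Pi.smul_apply, smul_eq_mul, mul_assoc, Finset.mul_sum]

lemma ginner_zero_left {n : ℕ} (f : Fin n → Fin n → ℝ) : ginner 0 f = 0 := by
  simp [ginner]

/-- any asym, orthogonal graph vanishing on `0 < j < k` entries is zero. -/
lemma vanish {n : ℕ} (z : Fin n) (hz : (z:ℕ) = 0) (d : Fin n → Fin n → ℝ)
    (hd : IsAsymGraph d) (ho : OrthST d)
    (h : ∀ j k : Fin n, 0 < (j:ℕ) → (j:ℕ) < (k:ℕ) → d j k = 0) : d = 0 := by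
  have hdiag : ∀ i : Fin n, d i i = 0 := by
    intro i; have := hd i i; linarith
  have hnz : ∀ j k : Fin n, 0 < (j:ℕ) → 0 < (k:ℕ) → d j k = 0 := by
    intro j k hj hk
    rcases lt_trichotomy (j:ℕ) (k:ℕ) with hlt | heq | hgt
    · exact h j k hj hlt
    · rw [Fin.ext_iff.mpr heq]; exact hdiag k
    · rw [hd j k, h k j hk hgt, neg_zero]
  have hrow : ∀ m : Fin n, 0 < (m:ℕ) → d m z = 0 := by
    intro m hm
    have horth := ho (eVert m) (eVert_asym m) (eVert_trans m)
    rw [ginner_eVert d hd m] at horth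
    have hsum : (∑ j : Fin n, d m j) = d m z := by
      refine Finset.sum_eq_single z (fun j _ hj => ?_) (by simp)
      refine hnz m j hm ?_
      rcases Nat.eq_zero_or_pos (j:ℕ) with h' | h'
      · exact absurd (Fin.ext_iff.mpr (h'.trans hz.symm)) hj
      · exact h'
    rw [hsum] at horth
    linarith
  funext i j
  simp only [Pi.zero_apply]
  rcases Nat.eq_zero_or_pos (i:ℕ) with hi | hi
  · rcases Nat.eq_zero_or_pos (j:ℕ) with hj | hj
    · rw [Fin.ext_iff.mpr (hi.trans hz.symm), Fin.ext_iff.mpr (hj.trans hz.symm)]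
      exact hdiag z
    · rw [Fin.ext_iff.mpr (hi.trans hz.symm), hd z j, hrow j hj, neg_zero]
  · rcases Nat.eq_zero_or_pos (j:ℕ) with hj | hj
    · rw [Fin.ext_iff.mpr (hj.trans hz.symm)]; exact hrow i hi
    · exact hnz i j hi hj

lemma sum_aux (n : ℕ) (hn : 1 ≤ n) :
    (∑ j ∈ Finset.range n, (if j = 0 then 0 else n - 1 - j)) = (n-1)*(n-2)/2 := by
  obtain ⟨m, rfl⟩ : ∃ m, n = m + 1 := ⟨n-1, by omega⟩
  simp only [Nat.add_sub_cancel]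
  have hrefl := Finset.sum_range_reflect (fun j => if j = 0 then 0 else m - j) (m+1)
  have congr1 : (∑ j ∈ Finset.range (m+1), (if m + 1 - 1 - j = 0 then 0 else m - (m + 1 - 1 - j)))
      = ∑ j ∈ Finset.range (m+1), (if j = m then 0 else j) := by
    refine Finset.sum_congr rfl fun j hj => ?_
    rw [Finset.mem_range] at hj
    rcases eq_or_ne j m with rfl | hne
    · simp
    · rw [if_neg (by omega), if_neg (by omega)]
      omega
  rw [congr1] at hrefl
  rw [← hrefl, Finset.sum_range_succ, if_pos rfl, add_zero]
  have hg := Finset.sum_range_id_mul_two m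
  have congr2 : (∑ j ∈ Finset.range m, (if j = m then 0 else j)) = ∑ j ∈ Finset.range m, j := by
    refine Finset.sum_congr rfl fun j hj => ?_
    rw [Finset.mem_range] at hj
    rw [if_neg (by omega)]
  rw [congr2]
  have h2 : m + 1 - 2 = m - 1 := by omega
  rw [h2]
  omega

lemma card_idx (n : ℕ) (hn : 3 ≤ n) :
    Fintype.card {p : Fin n × Fin n // 0 < (p.1 : ℕ) ∧ p.1 < p.2} = (n-1)*(n-2)/2 := by
  rw [Fintype.card_congr (Equiv.subtypeProdEquivSigmaSubtype (fun a b : Fin n => 0 < (a:ℕ) ∧ a < b))]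
  rw [Fintype.card_sigma]
  have hcard : ∀ j : Fin n, Fintype.card {k : Fin n // 0 < (j:ℕ) ∧ j < k}
      = if (j:ℕ) = 0 then 0 else n - 1 - j := by
    intro j
    rcases eq_or_ne (j:ℕ) 0 with hj | hj
    · rw [if_pos hj]
      rw [Fintype.card_eq_zero_iff]
      exact ⟨fun k => by omega⟩
    · rw [if_neg hj]
      rw [Fintype.card_congr (Equiv.subtypeEquivRight (fun k => by
        constructor
        · exact fun h => h.2
        · exact fun h => ⟨by omega, h⟩))]
      rw [Fintype.card_subtype]
      have : (Finset.univ.filter fun k : Fin n => j < k) = Finset.Ioi j := by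
        ext k; simp
      rw [this, Fin.card_Ioi]
  simp only [hcard]
  rw [Fin.sum_univ_eq_sum_range (fun j => if j = 0 then 0 else n - 1 - j)]
  exact sum_aux n (by omega)

theorem stmt3 (n : ℕ) (hn : 3 ≤ n) :
    ∃ S : Submodule ℝ (Fin n → Fin n → ℝ),
      (S : Set (Fin n → Fin n → ℝ)) = {d | IsAsymGraph d ∧ OrthST d} ∧
      Module.finrank ℝ S = (n - 1) * (n - 2) / 2 ∧
      LinearIndependent ℝ
        (fun p : {p : Fin n × Fin n // 0 < (p.1 : ℕ) ∧ p.1 < p.2} =>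
          threeCycle (⟨0, by omega⟩ : Fin n) p.1.1 p.1.2) ∧
      Submodule.span ℝ
        (Set.range (fun p : {p : Fin n × Fin n // 0 < (p.1 : ℕ) ∧ p.1 < p.2} =>
          threeCycle (⟨0, by omega⟩ : Fin n) p.1.1 p.1.2)) = S := by
  have hn0 : 0 < n := by omega
  set z : Fin n := ⟨0, hn0⟩ with hzdef
  have hzval : (z : ℕ) = 0 := rfl
  set v : {p : Fin n × Fin n // 0 < (p.1 : ℕ) ∧ p.1 < p.2} → (Fin n → Fin n → ℝ) :=
    fun p => threeCycle z p.1.1 p.1.2 with hvdef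
  -- distinctness facts
  have hd1 : ∀ p : {p : Fin n × Fin n // 0 < (p.1 : ℕ) ∧ p.1 < p.2}, z ≠ p.1.1 := by
    intro p h
    have := Fin.ext_iff.mp h
    have := p.2.1
    omega
  have hlt : ∀ p : {p : Fin n × Fin n // 0 < (p.1 : ℕ) ∧ p.1 < p.2},
      ((p.1.1 : ℕ) < (p.1.2 : ℕ)) := fun p => Fin.lt_def.mp p.2.2
  have hd2 : ∀ p : {p : Fin n × Fin n // 0 < (p.1 : ℕ) ∧ p.1 < p.2}, p.1.1 ≠ p.1.2 := by
    intro p h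
    have := Fin.ext_iff.mp h
    have := hlt p
    omega
  have hd3 : ∀ p : {p : Fin n × Fin n // 0 < (p.1 : ℕ) ∧ p.1 < p.2}, z ≠ p.1.2 := by
    intro p h
    have := Fin.ext_iff.mp h
    have := p.2.1
    have := hlt p
    omega
  -- entries of cycles on the strict upper triangle (excluding row/col 0)
  have hentry : ∀ (p : {p : Fin n × Fin n // 0 < (p.1 : ℕ) ∧ p.1 < p.2}) (j k : Fin n),
      0 < (j : ℕ) → (j : ℕ) < (k : ℕ) →
      v p j k = if j = p.1.1 ∧ k = p.1.2 then 1 else 0 := by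
    intro p j k hj hjk
    exact cycle_entry z j k p.1.1 p.1.2 hzval hj hjk p.2.1 (hlt p)
  -- every member of span is asym and orthogonal
  have hspan_sub : ∀ d ∈ Submodule.span ℝ (Set.range v), IsAsymGraph d ∧ OrthST d := by
    intro d hd
    induction hd using Submodule.span_induction with
    | mem x hx =>
      obtain ⟨p, rfl⟩ := hx
      exact ⟨threeCycle_asym (hd1 p) (hd2 p) (hd3 p),
        threeCycle_orth (hd1 p) (hd2 p) (hd3 p)⟩
    | zero =>
      refine ⟨fun i j => by simp, fun e he ht => ginner_zero_left e⟩
    | add x y hx hy hx' hy' =>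
      refine ⟨fun i j => ?_, fun e he ht => ?_⟩
      · simp only [Pi.add_apply, hx'.1 i j, hy'.1 i j]; ring
      · rw [ginner_add_left, hx'.2 e he ht, hy'.2 e he ht]; ring
    | smul a x hx hx' =>
      refine ⟨fun i j => ?_, fun e he ht => ?_⟩
      · simp only [Pi.smul_apply, smul_eq_mul, hx'.1 i j]; ring
      · rw [ginner_smul_left, hx'.2 e he ht]; ring
  -- linear independence
  have hli : LinearIndependent ℝ v := by
    rw [Fintype.linearIndependent_iff]
    intro g hg p0
    have happ := congrFun (congrFun hg p0.1.1) p0.1.2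
    simp only [Finset.sum_apply, Pi.smul_apply, smul_eq_mul, Pi.zero_apply] at happ
    rw [Finset.sum_eq_single p0 (fun p _ hp => ?_) (by simp)] at happ
    · rw [hentry p0 p0.1.1 p0.1.2 p0.2.1 (hlt p0), if_pos ⟨rfl, rfl⟩, mul_one] at happ
      exact happ
    · rw [hentry p p0.1.1 p0.1.2 p0.2.1 (hlt p0), if_neg, mul_zero]
      rintro ⟨h1, h2⟩
      exact hp (Subtype.ext (Prod.ext h1.symm h2.symm))
  -- completeness
  have hcomplete : ∀ d, IsAsymGraph d → OrthST d → d ∈ Submodule.span ℝ (Set.range v) := by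
    intro d hda hdo
    set s : Fin n → Fin n → ℝ := ∑ p, (d p.1.1 p.1.2) • v p with hsdef
    have hsmem : s ∈ Submodule.span ℝ (Set.range v) :=
      Submodule.sum_mem _ fun p _ => Submodule.smul_mem _ _ (Submodule.subset_span ⟨p, rfl⟩)
    have hs := hspan_sub s hsmem
    have hdiff : d - s = 0 := by
      refine vanish z hzval (d - s) (fun i j => ?_) (fun e he ht => ?_) (fun j k hj hjk => ?_)
      · simp only [Pi.sub_apply, hda i j, hs.1 i j]; ring
      · rw [ginner_sub_left, hdo e he ht, hs.2 e he ht]; ring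
      · have hsval : s j k = d j k := by
          rw [hsdef]
          simp only [Finset.sum_apply, Pi.smul_apply, smul_eq_mul]
          rw [Finset.sum_eq_single (⟨(j, k), hj, Fin.lt_def.mpr hjk⟩ :
              {p : Fin n × Fin n // 0 < (p.1 : ℕ) ∧ p.1 < p.2}) (fun p _ hp => ?_) (by simp)]
          · rw [hentry _ j k hj hjk, if_pos ⟨rfl, rfl⟩, mul_one]
          · rw [hentry p j k hj hjk, if_neg, mul_zero]
            rintro ⟨h1, h2⟩
            exact hp (Subtype.ext (Prod.ext h1.symm h2.symm))
        simp [Pi.sub_apply, hsval]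
    have hds : d = s := by
      have := sub_eq_zero.mp hdiff
      exact this
    rw [hds]
    exact hsmem
  refine ⟨Submodule.span ℝ (Set.range v), ?_, ?_, hli, rfl⟩
  · ext d
    simp only [SetLike.mem_coe, Set.mem_setOf_eq]
    exact ⟨fun h => hspan_sub d h, fun h => hcomplete d h.1 h.2⟩
  · rw [finrank_span_eq_card hli]
    exact card_idx n hn
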